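/- The eigenvalues λ_{2k}^n of the MDS integral operator on RP^n satisfy the recurrence (1/σ_n) λ_{2k}^n = (4k+n-2)[ (4k+n-4) · (R_{2k}^n / (σ_n R_{2k-2}^n)) · λ_{2k-2}^n − (4k+n-3) · (R_{2k}^n / (σ_{n+2} R_{2k-2}^{n+2})) · λ_{2k-2}^{n+2} ] for all n ≥ 1 and k ≥ 1. -/

import Mathlib

open MeasureTheory Real

noncomputable section

/-- The sphere `S^n` of radius one in `ℝ^{n+1}`. -/
abbrev unitSphere (n : ℕ) := Metric.sphere (0 : EuclideanSpace ℝ (Fin (n + 1))) 1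

/-- The (n-dimensional) volume of the round sphere `S^n ⊂ ℝ^{n+1}`. -/
def sphereVolume (n : ℕ) : ℝ := 2 * π ^ (((n : ℝ) + 1) / 2) / Real.Gamma (((n : ℝ) + 1) / 2)

/-- The constant `σ_n = -vol(S^{n-1})/vol(S^n)`. -/
def sigmaMDS (n : ℕ) : ℝ :=
  -(2 * π ^ ((n : ℝ) / 2) / Real.Gamma ((n : ℝ) / 2)) / sphereVolume n

/-- The Rodrigues constant `R_{2k}^n = 4^{-k} Γ(n/2)/Γ(n/2+2k)`. -/
def rodriguesR (n k : ℕ) : ℝ :=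
  (1 / 4 ^ k) * Real.Gamma ((n : ℝ) / 2) / Real.Gamma ((n : ℝ) / 2 + 2 * k)

/-- `F_{2k}^n(t) = P_{2k}^n(t)(1-t²)^{(n-2)/2}
  = R_{2k}^n (d/dt)^{2k} (1-t²)^{2k+(n-2)/2}` (Rodrigues formula), where `P_{2k}^n` is the
degree-`2k` Legendre polynomial for `S^n`. -/
def legendreF (n k : ℕ) (t : ℝ) : ℝ :=
  rodriguesR n k *
    iteratedDeriv (2 * k) (fun s : ℝ => (1 - s ^ 2) ^ (2 * (k : ℝ) + ((n : ℝ) - 2) / 2)) t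

/-- The eigenvalue `λ_{2k}^n = σ_n ∫_0^1 arccos²(t) P_{2k}^n(t)(1-t²)^{(n-2)/2} dt` of the MDS
integral operator on `ℝP^n` on degree-`2k` spherical harmonics. -/
def lamRP (n k : ℕ) : ℝ :=
  sigmaMDS n * ∫ t in (0 : ℝ)..1, Real.arccos t ^ 2 * legendreF n k t

/-- `φ : S^n → ℝ` is a spherical harmonic of degree `k`: the restriction to the sphere of a
smooth function on `ℝ^{n+1}` which is homogeneous of degree `k` and harmonic. -/
def IsSphericalHarmonic (n k : ℕ) (φ : unitSphere n → ℝ) : Prop :=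
  ∃ p : EuclideanSpace ℝ (Fin (n + 1)) → ℝ, ContDiff ℝ ⊤ p ∧
    (∀ (r : ℝ) (x), p (r • x) = r ^ k * p x) ∧
    (∀ x, ∑ i, fderiv ℝ (fun y => fderiv ℝ p y (EuclideanSpace.single i 1)) x
        (EuclideanSpace.single i 1) = 0) ∧
    ∀ x : unitSphere n, φ x = p (x : EuclideanSpace ℝ (Fin (n + 1)))

end

noncomputable section Aux

open Set Filter Topology

private def gfun (β : ℝ) : ℝ → ℝ := fun s => (1 - s ^ 2) ^ β

private lemma pos_of_mem_Ioo {t : ℝ} (ht : t ∈ Ioo (-1:ℝ) 1) : 0 < 1 - t ^ 2 := by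
  nlinarith [ht.1, ht.2]

private lemma hasDerivAt_gfun (β : ℝ) {t : ℝ} (ht : 1 - t ^ 2 ≠ 0) :
    HasDerivAt (gfun β) (-(2 * t) * β * (1 - t ^ 2) ^ (β - 1)) t := by
  have h : HasDerivAt (fun s : ℝ => 1 - s ^ 2) (-(2 * t)) t := by
    simpa using (hasDerivAt_pow 2 t).const_sub 1
  exact h.rpow_const (Or.inl ht)

private lemma deriv2_gfun (α : ℝ) {t : ℝ} (ht : t ∈ Ioo (-1:ℝ) 1) :
    deriv (deriv (gfun α)) t
      = (2*α*(2*α-2)) * gfun (α-2) t - (2*α*(2*α-1)) * gfun (α-1) t := by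
  have hpos : 0 < 1 - t ^ 2 := pos_of_mem_Ioo ht
  have hev : deriv (gfun α) =ᶠ[𝓝 t] fun s => -(2 * s) * α * (1 - s ^ 2) ^ (α - 1) := by
    filter_upwards [isOpen_Ioo.mem_nhds ht] with s hs
    exact (hasDerivAt_gfun α (pos_of_mem_Ioo hs).ne').deriv
  rw [hev.deriv_eq]
  have hlin : HasDerivAt (fun s : ℝ => -(2 * s)) (-2) t := by
    simpa using (hasDerivAt_id t).const_mul (-2:ℝ)
  have hmul : HasDerivAt (fun s : ℝ => -(2 * s) * α * (1 - s ^ 2) ^ (α - 1))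
      ((-2 * α) * ((1 - t ^ 2) ^ (α - 1))
        + (-(2 * t) * α) * (-(2 * t) * (α - 1) * (1 - t ^ 2) ^ (α - 1 - 1))) t :=
    (hlin.mul_const α).mul (hasDerivAt_gfun (α-1) hpos.ne')
  rw [hmul.deriv]
  have he : α - 1 - 1 = α - 2 := by ring
  rw [he]
  have hkey : (1 - t ^ 2) ^ (α - 1) = (1 - t ^ 2) ^ (α - 2) * (1 - t ^ 2) := by
    rw [show α - 1 = (α - 2) + 1 by ring, Real.rpow_add_one hpos.ne']
  simp only [gfun]
  rw [hkey]
  ring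

private lemma iteratedDerivWithin_isOpen' {f : ℝ → ℝ} {s : Set ℝ} (hs : IsOpen s) {x : ℝ}
    (hx : x ∈ s) (n : ℕ) : iteratedDerivWithin n f s x = iteratedDeriv n f x := by
  simp only [iteratedDerivWithin, iteratedDeriv, iteratedFDerivWithin_of_isOpen n hs hx]

private lemma contDiffOn_gfun (β : ℝ) (n : ℕ∞) :
    ContDiffOn ℝ n (gfun β) (Ioo (-1:ℝ) 1) := by
  have h : ContDiffOn ℝ n (fun s : ℝ => 1 - s ^ 2) (Ioo (-1:ℝ) 1) :=
    (contDiff_const.sub (contDiff_id.pow 2)).contDiffOn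
  exact h.rpow_const_of_ne fun x hx => (pos_of_mem_Ioo hx).ne'

private lemma iteratedDeriv_gfun_step (α : ℝ) (m : ℕ) {t : ℝ} (ht : t ∈ Ioo (-1:ℝ) 1) :
    iteratedDeriv (m + 2) (gfun α) t
      = (2*α*(2*α-2)) * iteratedDeriv m (gfun (α-2)) t
        - (2*α*(2*α-1)) * iteratedDeriv m (gfun (α-1)) t := by
  have h2 : iteratedDeriv (m + 2) (gfun α) t = iteratedDeriv m (deriv (deriv (gfun α))) t := by
    rw [show m + 2 = m + 1 + 1 from rfl, iteratedDeriv_succ', iteratedDeriv_succ']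
  rw [h2]
  have hcong : iteratedDeriv m (deriv (deriv (gfun α))) t
      = iteratedDeriv m
          (fun s => (2*α*(2*α-2)) * gfun (α-2) s - (2*α*(2*α-1)) * gfun (α-1) s) t := by
    refine Filter.EventuallyEq.iteratedDeriv_eq m ?_
    filter_upwards [isOpen_Ioo.mem_nhds ht] with s hs
    exact deriv2_gfun α hs
  rw [hcong]
  have hU : UniqueDiffOn ℝ (Ioo (-1:ℝ) 1) := isOpen_Ioo.uniqueDiffOn
  have hf : ContDiffOn ℝ m (fun s => (2*α*(2*α-2)) * gfun (α-2) s) (Ioo (-1:ℝ) 1) :=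
    contDiffOn_const.mul (contDiffOn_gfun (α-2) m)
  have hg : ContDiffOn ℝ m (fun s => (2*α*(2*α-1)) * gfun (α-1) s) (Ioo (-1:ℝ) 1) :=
    contDiffOn_const.mul (contDiffOn_gfun (α-1) m)
  have hpi : (fun s => (2*α*(2*α-2)) * gfun (α-2) s - (2*α*(2*α-1)) * gfun (α-1) s)
      = (fun s => (2*α*(2*α-2)) * gfun (α-2) s) - (fun s => (2*α*(2*α-1)) * gfun (α-1) s) := rfl
  rw [← iteratedDerivWithin_isOpen' isOpen_Ioo ht m, hpi,
    iteratedDerivWithin_sub ht hU (hf t ht) (hg t ht),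
    iteratedDerivWithin_const_mul ht hU _ (contDiffOn_gfun (α-2) m t ht),
    iteratedDerivWithin_const_mul ht hU _ (contDiffOn_gfun (α-1) m t ht),
    iteratedDerivWithin_isOpen' isOpen_Ioo ht m, iteratedDerivWithin_isOpen' isOpen_Ioo ht m]

private lemma poly_form (β : ℝ) (m : ℕ) :
    ∃ q : Polynomial ℝ, ∀ t ∈ Ioo (-1:ℝ) 1,
      iteratedDeriv m (gfun β) t = (1 - t ^ 2) ^ (β - (m:ℝ)) * q.eval t := by
  induction m with
  | zero => exact ⟨1, fun t ht => by simp [gfun]⟩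
  | succ m ih =>
    obtain ⟨q, hq⟩ := ih
    refine ⟨Polynomial.C (-2*(β - m)) * Polynomial.X * q
      + (1 - Polynomial.X ^ 2) * Polynomial.derivative q, fun t ht => ?_⟩
    have hpos := pos_of_mem_Ioo ht
    rw [iteratedDeriv_succ]
    have hev : iteratedDeriv m (gfun β)
        =ᶠ[𝓝 t] fun s => (1 - s ^ 2) ^ (β - (m:ℝ)) * q.eval s := by
      filter_upwards [isOpen_Ioo.mem_nhds ht] with s hs
      exact hq s hs
    rw [hev.deriv_eq]
    have h1 : HasDerivAt (fun s : ℝ => (1 - s ^ 2) ^ (β - (m:ℝ)) * q.eval s)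
        ((-(2 * t) * (β - m) * (1 - t ^ 2) ^ (β - m - 1)) * q.eval t
          + (1 - t ^ 2) ^ (β - (m:ℝ)) * (Polynomial.derivative q).eval t) t :=
      (hasDerivAt_gfun (β - m) hpos.ne').mul (q.hasDerivAt t)
    rw [h1.deriv]
    have hc : β - ((m+1:ℕ):ℝ) = β - m - 1 := by push_cast; ring
    rw [hc]
    have hsplit : (1 - t ^ 2) ^ (β - (m:ℝ)) = (1 - t ^ 2) ^ (β - m - 1) * (1 - t ^ 2) := by
      have h := Real.rpow_add_one hpos.ne' (β - m - 1)
      rw [show β - (m:ℝ) - 1 + 1 = β - m by ring] at h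
      exact h
    rw [hsplit]
    simp only [Polynomial.eval_add, Polynomial.eval_mul, Polynomial.eval_C, Polynomial.eval_X,
      Polynomial.eval_pow, Polynomial.eval_sub, Polynomial.eval_one]
    ring

private lemma rodriguesR_pos (n k : ℕ) (hn : 1 ≤ n) : 0 < rodriguesR n k := by
  have h0 : (0:ℝ) < n := by exact_mod_cast hn
  have h1 : 0 < Real.Gamma ((n:ℝ)/2) := Real.Gamma_pos_of_pos (by positivity)
  have h2 : 0 < Real.Gamma ((n:ℝ)/2 + 2*k) := Real.Gamma_pos_of_pos (by positivity)
  unfold rodriguesR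
  positivity

private lemma sigmaMDS_neg (m : ℕ) (hm : 1 ≤ m) : sigmaMDS m < 0 := by
  have h0 : (0:ℝ) < m := by exact_mod_cast hm
  have h1 : 0 < Real.Gamma ((m:ℝ)/2) := Real.Gamma_pos_of_pos (by positivity)
  have h2 : 0 < Real.Gamma (((m:ℝ)+1)/2) := Real.Gamma_pos_of_pos (by positivity)
  have h3 : 0 < π ^ ((m:ℝ)/2) := Real.rpow_pos_of_pos pi_pos _
  have h4 : 0 < π ^ (((m:ℝ)+1)/2) := Real.rpow_pos_of_pos pi_pos _
  unfold sigmaMDS sphereVolume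
  rw [neg_div]
  have hA : 0 < 2 * π ^ ((m:ℝ)/2) / Real.Gamma ((m:ℝ)/2) := by positivity
  have hB : 0 < 2 * π ^ (((m:ℝ)+1)/2) / Real.Gamma (((m:ℝ)+1)/2) := by positivity
  have := div_pos hA hB
  linarith

end Aux

noncomputable section Aux2

open Set Filter Topology

private lemma integrable_arccos_legendre (n' k' : ℕ) (hn' : 1 ≤ n') :
    IntervalIntegrable (fun t => Real.arccos t ^ 2 * legendreF n' k' t) volume 0 1 := by
  set γ : ℝ := ((n' : ℝ) - 2) / 2 with hγ
  obtain ⟨q, hq⟩ := poly_form (2 * (k' : ℝ) + γ) (2 * k')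
  set R : ℝ := rodriguesR n' k' with hR
  have hq' : ∀ t ∈ Ioo (-1:ℝ) 1,
      iteratedDeriv (2 * k') (fun s : ℝ => (1 - s ^ 2) ^ (2 * (k' : ℝ) + γ)) t
        = (1 - t ^ 2) ^ γ * q.eval t := by
    intro t ht
    have h := hq t ht
    rw [show 2 * (k' : ℝ) + γ - ((2 * k' : ℕ) : ℝ) = γ by push_cast; ring] at h
    exact h
  set φ : ℝ → ℝ := fun t => Real.arccos t ^ 2 * (R * ((1 - t ^ 2) ^ γ * q.eval t)) with hφ
  have hpt : ∀ t ∈ Ioo (0:ℝ) 1, Real.arccos t ^ 2 * legendreF n' k' t = φ t := by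
    intro t ht
    have ht' : t ∈ Ioo (-1:ℝ) 1 := ⟨by linarith [ht.1], ht.2⟩
    simp only [hφ, legendreF, ← hR, ← hγ]
    rw [hq' t ht']
  obtain ⟨M, hM⟩ := isCompact_Icc.exists_bound_of_continuousOn
    (f := fun t : ℝ => q.eval t) (q.continuous.continuousOn (s := Icc (0:ℝ) 1))
  have hM0 : 0 ≤ M := le_trans (norm_nonneg _) (hM 0 (by norm_num))
  set C0 : ℝ := π ^ 2 * (|R| * ((2:ℝ) ^ |γ| * M)) with hC0
  set ψ : ℝ → ℝ := fun t => C0 * (1 - t) ^ (-(1/2) : ℝ) with hψ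
  have hγlb : -(1/2 : ℝ) ≤ γ := by
    have : (1:ℝ) ≤ n' := by exact_mod_cast hn'
    rw [hγ]; linarith
  have hψint : IntervalIntegrable ψ volume 0 1 := by
    have h0 : IntervalIntegrable (fun x : ℝ => x ^ (-(1/2):ℝ)) volume 1 0 :=
      intervalIntegral.intervalIntegrable_rpow' (by norm_num)
    have h1 := h0.comp_sub_left 1
    norm_num at h1
    exact h1.const_mul C0
  have hψIoo : IntegrableOn ψ (Ioo (0:ℝ) 1) volume := by
    rw [intervalIntegrable_iff, uIoc_of_le (zero_le_one' ℝ)] at hψint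
    exact hψint.mono_set Ioo_subset_Ioc_self
  have hpos01 : ∀ t ∈ Ioo (0:ℝ) 1, 0 < 1 - t ^ 2 := by
    intro t ht; nlinarith [ht.1, ht.2]
  have hφcont : ContinuousOn φ (Ioo (0:ℝ) 1) := by
    apply ((Real.continuous_arccos.continuousOn).pow 2).mul
    apply continuousOn_const.mul
    apply ContinuousOn.mul ?_ q.continuous.continuousOn
    exact ContinuousOn.rpow_const
      ((continuous_const.sub (continuous_pow 2)).continuousOn)
      (fun t ht => Or.inl (hpos01 t ht).ne')
  have hbound : ∀ t ∈ Ioo (0:ℝ) 1, |φ t| ≤ ψ t := by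
    intro t ht
    have h1t : 0 < 1 - t := by linarith [ht.2]
    have hposr := hpos01 t ht
    have hrpow_pos : (0:ℝ) < (1 - t ^ 2) ^ γ := Real.rpow_pos_of_pos hposr _
    have habs : |φ t| = Real.arccos t ^ 2 * (|R| * ((1 - t ^ 2) ^ γ * |q.eval t|)) := by
      simp only [hφ]
      rw [abs_mul, abs_mul, abs_mul]
      rw [abs_of_nonneg (by positivity : (0:ℝ) ≤ Real.arccos t ^ 2),
        abs_of_pos hrpow_pos]
    show |φ t| ≤ C0 * (1 - t) ^ (-(1/2) : ℝ)
    rw [habs, hC0]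
    have harc : Real.arccos t ^ 2 ≤ π ^ 2 :=
      pow_le_pow_left₀ (Real.arccos_nonneg t) (Real.arccos_le_pi t) 2
    have hqb : |q.eval t| ≤ M := by
      have := hM t ⟨le_of_lt ht.1, le_of_lt ht.2⟩
      simpa [Real.norm_eq_abs] using this
    have hsplitb : (1 - t ^ 2) ^ γ ≤ (2:ℝ) ^ |γ| * (1 - t) ^ (-(1/2):ℝ) := by
      have hfac : (1:ℝ) - t ^ 2 = (1 + t) * (1 - t) := by ring
      rw [hfac, Real.mul_rpow (by linarith [ht.1]) (le_of_lt h1t)]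
      have hb1 : (1 + t) ^ γ ≤ (2:ℝ) ^ |γ| := by
        calc (1 + t) ^ γ ≤ (1 + t) ^ |γ| :=
              Real.rpow_le_rpow_of_exponent_le (by linarith [ht.1]) (le_abs_self γ)
          _ ≤ (2:ℝ) ^ |γ| :=
              Real.rpow_le_rpow (by linarith [ht.1]) (by linarith [ht.2]) (abs_nonneg γ)
      have hb2 : (1 - t) ^ γ ≤ (1 - t) ^ (-(1/2):ℝ) :=
        Real.rpow_le_rpow_of_exponent_ge h1t (by linarith [ht.1]) hγlb
      exact mul_le_mul hb1 hb2 (Real.rpow_nonneg (le_of_lt h1t) _) (by positivity)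
    calc Real.arccos t ^ 2 * (|R| * ((1 - t ^ 2) ^ γ * |q.eval t|))
        ≤ π ^ 2 * (|R| * (((2:ℝ) ^ |γ| * (1 - t) ^ (-(1/2):ℝ)) * M)) := by
          apply mul_le_mul harc ?_ (by positivity) (by positivity)
          apply mul_le_mul_of_nonneg_left ?_ (abs_nonneg R)
          exact mul_le_mul hsplitb hqb (abs_nonneg _) (by positivity)
      _ = π ^ 2 * (|R| * ((2:ℝ) ^ |γ| * M)) * (1 - t) ^ (-(1/2):ℝ) := by ring
  have hφint : IntegrableOn φ (Ioo (0:ℝ) 1) volume := by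
    refine Integrable.mono hψIoo (hφcont.aestronglyMeasurable measurableSet_Ioo) ?_
    rw [ae_restrict_iff' measurableSet_Ioo]
    refine ae_of_all _ fun t ht => ?_
    rw [Real.norm_eq_abs, Real.norm_eq_abs]
    exact le_trans (hbound t ht) (le_abs_self _)
  have hfint : IntegrableOn (fun t => Real.arccos t ^ 2 * legendreF n' k' t)
      (Ioo (0:ℝ) 1) volume := by
    refine hφint.congr ?_
    rw [Filter.EventuallyEq, ae_restrict_iff' measurableSet_Ioo]
    exact ae_of_all _ fun t ht => (hpt t ht).symm
  rw [intervalIntegrable_iff, uIoc_of_le (zero_le_one' ℝ), IntegrableOn,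
    ← Measure.restrict_congr_set Ioo_ae_eq_Ioc]
  exact hfint

end Aux2

noncomputable section Aux3

open Set Filter Topology

private lemma legendre_rec (n k : ℕ) (hn : 1 ≤ n) (hk : 1 ≤ k) {t : ℝ}
    (ht : t ∈ Ioo (-1:ℝ) 1) :
    legendreF n k t
      = ((4*(k:ℝ)+n-2) * ((4*(k:ℝ)+n-4) * (rodriguesR n k / rodriguesR n (k-1))))
          * legendreF n (k-1) t
        - ((4*(k:ℝ)+n-2) * ((4*(k:ℝ)+n-3) * (rodriguesR n k / rodriguesR (n+2) (k-1))))
          * legendreF (n+2) (k-1) t := by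
  have hR1 := (rodriguesR_pos n (k-1) hn).ne'
  have hR2 := (rodriguesR_pos (n+2) (k-1) (by omega)).ne'
  set α : ℝ := 2 * (k:ℝ) + ((n:ℝ) - 2) / 2 with hα
  have hkc : ((k - 1 : ℕ) : ℝ) = (k:ℝ) - 1 := by
    rw [Nat.cast_sub hk, Nat.cast_one]
  have e0 : legendreF n k t = rodriguesR n k * iteratedDeriv (2*(k-1) + 2) (gfun α) t := by
    simp only [legendreF, ← hα]
    rw [show 2 * k = 2*(k-1) + 2 by omega]
    rfl
  have e1 : legendreF n (k-1) t
      = rodriguesR n (k-1) * iteratedDeriv (2*(k-1)) (gfun (α-2)) t := by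
    have hl : (fun s : ℝ => (1 - s ^ 2) ^ (2 * ((k-1:ℕ):ℝ) + ((n:ℝ) - 2) / 2))
        = gfun (α - 2) := by
      rw [show 2 * ((k-1:ℕ):ℝ) + ((n:ℝ) - 2) / 2 = α - 2 by rw [hkc, hα]; ring]
      rfl
    simp only [legendreF, hl]
  have e2 : legendreF (n+2) (k-1) t
      = rodriguesR (n+2) (k-1) * iteratedDeriv (2*(k-1)) (gfun (α-1)) t := by
    have hl : (fun s : ℝ => (1 - s ^ 2) ^ (2 * ((k-1:ℕ):ℝ) + (((n+2:ℕ):ℝ) - 2) / 2))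
        = gfun (α - 1) := by
      rw [show 2 * ((k-1:ℕ):ℝ) + (((n+2:ℕ):ℝ) - 2) / 2 = α - 1 by
        rw [hkc, hα]; push_cast; ring]
      rfl
    simp only [legendreF, hl]
  rw [e0, e1, e2, iteratedDeriv_gfun_step α (2*(k-1)) ht, hα]
  field_simp
  ring

private lemma I_rec (n k : ℕ) (hn : 1 ≤ n) (hk : 1 ≤ k) :
    (∫ t in (0:ℝ)..1, Real.arccos t ^ 2 * legendreF n k t)
      = ((4*(k:ℝ)+n-2) * ((4*(k:ℝ)+n-4) * (rodriguesR n k / rodriguesR n (k-1))))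
          * (∫ t in (0:ℝ)..1, Real.arccos t ^ 2 * legendreF n (k-1) t)
        - ((4*(k:ℝ)+n-2) * ((4*(k:ℝ)+n-3) * (rodriguesR n k / rodriguesR (n+2) (k-1))))
          * (∫ t in (0:ℝ)..1, Real.arccos t ^ 2 * legendreF (n+2) (k-1) t) := by
  have h1 := integrable_arccos_legendre n (k-1) hn
  have h2 := integrable_arccos_legendre (n+2) (k-1) (by omega)
  set A : ℝ := (4*(k:ℝ)+n-2) * ((4*(k:ℝ)+n-4) * (rodriguesR n k / rodriguesR n (k-1)))
    with hA
  set B : ℝ := (4*(k:ℝ)+n-2) * ((4*(k:ℝ)+n-3) * (rodriguesR n k / rodriguesR (n+2) (k-1)))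
    with hB
  have hne : ∀ᵐ t : ℝ, t ≠ 1 := by
    have h : {x : ℝ | ¬ x ≠ 1} = {1} := by ext x; simp
    rw [ae_iff, h]
    exact measure_singleton 1
  have hcong : (∫ t in (0:ℝ)..1, Real.arccos t ^ 2 * legendreF n k t)
      = ∫ t in (0:ℝ)..1, (A * (Real.arccos t ^ 2 * legendreF n (k-1) t)
          - B * (Real.arccos t ^ 2 * legendreF (n+2) (k-1) t)) := by
    refine intervalIntegral.integral_congr_ae ?_
    filter_upwards [hne] with t ht1 htm
    rw [uIoc_of_le (zero_le_one' ℝ)] at htm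
    have htIoo : t ∈ Ioo (-1:ℝ) 1 := ⟨by linarith [htm.1], lt_of_le_of_ne htm.2 ht1⟩
    rw [legendre_rec n k hn hk htIoo, hA, hB]
    ring
  rw [hcong, intervalIntegral.integral_sub (h1.const_mul A) (h2.const_mul B),
    intervalIntegral.integral_const_mul, intervalIntegral.integral_const_mul]

end Aux3

/-- the eigenvalues `λ_{2k}^n` of the MDS integral operator on `ℝP^n` satisfy
the recurrence
`(1/σ_n) λ_{2k}^n = (4k+n-2)[(4k+n-4)(R_{2k}^n/(σ_n R_{2k-2}^n))λ_{2k-2}^n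
  − (4k+n-3)(R_{2k}^n/(σ_{n+2} R_{2k-2}^{n+2}))λ_{2k-2}^{n+2}]` for all `n ≥ 1`, `k ≥ 1`. -/
theorem lamRP_recurrence (n k : ℕ) (hn : 1 ≤ n) (hk : 1 ≤ k) :
    (1 / sigmaMDS n) * lamRP n k
      = (4 * (k : ℝ) + n - 2) *
          ((4 * (k : ℝ) + n - 4) * (rodriguesR n k / (sigmaMDS n * rodriguesR n (k - 1)))
              * lamRP n (k - 1)
            - (4 * (k : ℝ) + n - 3)
              * (rodriguesR n k / (sigmaMDS (n + 2) * rodriguesR (n + 2) (k - 1)))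
              * lamRP (n + 2) (k - 1)) := by
  have hσn := (sigmaMDS_neg n hn).ne
  have hσn2 := (sigmaMDS_neg (n+2) (by omega)).ne
  have hR1 := (rodriguesR_pos n (k-1) hn).ne'
  have hR2 := (rodriguesR_pos (n+2) (k-1) (by omega)).ne'
  simp only [lamRP]
  rw [I_rec n k hn hk]
  field_simp
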